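/- Let H : ℂ → ℂ be differentiable and satisfy the ODE Ḣ² = ∏ᵢ₌₁ⁿ (H - βᵢ) for constants β₁,…,βₙ ∈ ℂ, with Ḣ nonvanishing on a domain. Define V implicitly near a point by the relation ∑ᵢ₌₁ⁿ xᵢ²/(H(V) - βᵢ) = C with each H(V) - βᵢ ≠ 0. Then V satisfies the Laplace equation ∑ᵢ ∂²V/∂xᵢ² = 0 on that domain. -/

import Mathlib

open scoped BigOperators



lemma key1_aux {n : ℕ} (β : Fin n → ℂ) (H : ℂ → ℂ) (hH : Differentiable ℂ H)
    (C : ℂ) (s : Set (Fin n → ℂ)) (hs : IsOpen s) (V : (Fin n → ℂ) → ℂ)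
    (hV : ContDiffOn ℂ 2 V s)
    (hrel : ∀ x ∈ s, ∑ i, (x i)^2 / (H (V x) - β i) = C)
    (hden : ∀ x ∈ s, ∀ i, H (V x) - β i ≠ 0) :
    ∀ y ∈ s, ∀ j, 2 * y j / (H (V y) - β j)
      = (∑ i, (y i)^2 / (H (V y) - β i)^2) * (deriv H (V y) * fderiv ℂ V y (Pi.single j 1)) := by
  classical
  let P : Fin n → ((Fin n → ℂ) →L[ℂ] ℂ) := fun i => ContinuousLinearMap.proj i
  intro y hy j
  have hVy : HasFDerivAt V (fderiv ℂ V y) y :=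
    (((hV.differentiableOn (by norm_num)) y hy).differentiableAt (hs.mem_nhds hy)).hasFDerivAt
  have hterm : ∀ i : Fin n, HasFDerivAt (fun z : Fin n → ℂ => (z i)^2 * (H (V z) - β i)⁻¹)
      ( ((y i)^2) • ((-((H (V y) - β i)^2)⁻¹) • (deriv H (V y) • fderiv ℂ V y))
        + ((H (V y) - β i)⁻¹) • (((2:ℂ) * (y i) ^ 1) • P i) ) y := by
    intro i
    have hp : HasFDerivAt (fun z : Fin n → ℂ => z i) (P i) y := (P i).hasFDerivAt
    have hsq : HasFDerivAt (fun z : Fin n → ℂ => (z i)^2)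
        (((2:ℂ) * (y i)^1) • P i) y := by
      simpa [Function.comp_def] using (hasDerivAt_pow 2 (y i)).comp_hasFDerivAt y hp
    have hW : HasFDerivAt (fun z => H (V z) - β i) (deriv H (V y) • fderiv ℂ V y) y := by
      simpa using (((hH (V y)).hasDerivAt.comp_hasFDerivAt y hVy).sub_const (β i))
    have hinv : HasFDerivAt (fun z => (H (V z) - β i)⁻¹)
        ((-((H (V y) - β i)^2)⁻¹) • (deriv H (V y) • fderiv ℂ V y)) y := by
      simpa [Function.comp_def] using (hasDerivAt_inv (hden y hy i)).comp_hasFDerivAt y hW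
    exact hsq.mul hinv
  have hg : HasFDerivAt (fun z : Fin n → ℂ => ∑ i, (z i)^2 * (H (V z) - β i)⁻¹)
      (∑ i, ( ((y i)^2) • ((-((H (V y) - β i)^2)⁻¹) • (deriv H (V y) • fderiv ℂ V y))
        + ((H (V y) - β i)⁻¹) • (((2:ℂ) * (y i) ^ 1) • P i) )) y :=
    HasFDerivAt.fun_sum (fun i _ => hterm i)
  have hzero : (fderiv ℂ (fun z : Fin n → ℂ => ∑ i, (z i)^2 * (H (V z) - β i)⁻¹) y) = 0 := by
    have heq : (fun z : Fin n → ℂ => ∑ i, (z i)^2 * (H (V z) - β i)⁻¹) =ᶠ[nhds y] (fun _ => C) := by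
      filter_upwards [hs.mem_nhds hy] with z hz
      simpa [div_eq_mul_inv] using hrel z hz
    rw [heq.fderiv_eq]
    exact fderiv_const_apply C
  have h0 : (∑ i, ( ((y i)^2) • ((-((H (V y) - β i)^2)⁻¹) • (deriv H (V y) • fderiv ℂ V y))
        + ((H (V y) - β i)⁻¹) • (((2:ℂ) * (y i) ^ 1) • P i) )) = 0 := by
    rw [← hg.fderiv]; exact hzero
  have h1 := ContinuousLinearMap.ext_iff.1 h0 (Pi.single j 1)
  simp only [ContinuousLinearMap.coe_sum', Finset.sum_apply, ContinuousLinearMap.add_apply,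
    ContinuousLinearMap.smul_apply, ContinuousLinearMap.proj_apply, smul_eq_mul,
    ContinuousLinearMap.zero_apply, pow_one, Finset.sum_add_distrib] at h1
  simp only [P, ContinuousLinearMap.proj_apply, Pi.single_apply, mul_ite, mul_one, mul_zero,
    Finset.sum_ite_eq', Finset.mem_univ, if_true] at h1
  have hsum : ∀ x : Fin n, y x ^ 2 * (-((H (V y) - β x) ^ 2)⁻¹ * (deriv H (V y) * (fderiv ℂ V y) (Pi.single j 1)))
      = -(y x ^ 2 / (H (V y) - β x) ^ 2 * (deriv H (V y) * (fderiv ℂ V y) (Pi.single j 1))) := by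
    intro x; rw [div_eq_mul_inv]; ring
  rw [Finset.sum_congr rfl (fun x _ => hsum x), Finset.sum_neg_distrib, ← Finset.sum_mul] at h1
  rw [div_eq_mul_inv]
  linear_combination h1


lemma key2_aux {n : ℕ} (β : Fin n → ℂ) (H : ℂ → ℂ) (hH : Differentiable ℂ H)
    (C : ℂ) (s : Set (Fin n → ℂ)) (hs : IsOpen s) (V : (Fin n → ℂ) → ℂ)
    (hV : ContDiffOn ℂ 2 V s)
    (hrel : ∀ x ∈ s, ∑ i, (x i)^2 / (H (V x) - β i) = C)
    (hden : ∀ x ∈ s, ∀ i, H (V x) - β i ≠ 0)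
    (key1 : ∀ y ∈ s, ∀ j, 2 * y j / (H (V y) - β j)
      = (∑ i, (y i)^2 / (H (V y) - β i)^2) * (deriv H (V y) * fderiv ℂ V y (Pi.single j 1)))
    (x : Fin n → ℂ) (hx : x ∈ s) (j : Fin n) :
    2 * (H (V x) - β j)⁻¹
    - 2 * x j * (deriv H (V x) * fderiv ℂ V x (Pi.single j 1)) / (H (V x) - β j)^2
    - (2 * x j / (H (V x) - β j)^2
        - 2 * (∑ i, (x i)^2/(H (V x) - β i)^3) * (deriv H (V x) * fderiv ℂ V x (Pi.single j 1)))
        * (deriv H (V x) * fderiv ℂ V x (Pi.single j 1))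
    - (∑ i, (x i)^2/(H (V x) - β i)^2)
        * (deriv (deriv H) (V x) * (fderiv ℂ V x (Pi.single j 1))^2
           + deriv H (V x) * fderiv ℂ (fun y => fderiv ℂ V y (Pi.single j 1)) x (Pi.single j 1)) = 0 := by
  classical
  let P : Fin n → ((Fin n → ℂ) →L[ℂ] ℂ) := fun i => ContinuousLinearMap.proj i
  have hHd2 : Differentiable ℂ (deriv H) :=
    ((contDiff_succ_iff_deriv.1 (hH.contDiff : ContDiff ℂ (1+1) H)).2.2).differentiable one_ne_zero
  have hVdOn : DifferentiableOn ℂ V s := hV.differentiableOn (by norm_num)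
  have hVx : HasFDerivAt V (fderiv ℂ V x) x :=
    ((hVdOn x hx).differentiableAt (hs.mem_nhds hx)).hasFDerivAt
  set dH := deriv H (V x) with hdH
  set m := deriv (deriv H) (V x) with hm
  set DV := fderiv ℂ V x with hDV
  set w : Fin n → ℂ := fun i => H (V x) - β i with hwdef
  have hwne : ∀ i, w i ≠ 0 := hden x hx
  set DW : (Fin n → ℂ) →L[ℂ] ℂ := dH • DV with hDW
  have hW : ∀ i, HasFDerivAt (fun z => H (V z) - β i) DW x := by
    intro i
    simpa using (((hH (V x)).hasDerivAt.comp_hasFDerivAt x hVx).sub_const (β i))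
  -- derivative of y ↦ fderiv V y (e j)
  have hD1 : ContDiffOn ℂ 1 (fderiv ℂ V) s := hV.fderiv_of_isOpen hs (by norm_num)
  have hdiffQ : DifferentiableAt ℂ (fun y => fderiv ℂ V y (Pi.single j 1)) x := by
    have h1 : DifferentiableAt ℂ (fderiv ℂ V) x :=
      ((hD1.differentiableOn one_ne_zero) x hx).differentiableAt (hs.mem_nhds hx)
    exact h1.clm_apply (differentiableAt_const _)
  set Q := fderiv ℂ (fun y => fderiv ℂ V y (Pi.single j 1)) x with hQ
  have hu2 : HasFDerivAt (fun y => fderiv ℂ V y (Pi.single j 1)) Q x := hdiffQ.hasFDerivAt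
  have hu1 : HasFDerivAt (fun y => deriv H (V y)) (m • DV) x :=
    (hHd2 (V x)).hasDerivAt.comp_hasFDerivAt x hVx
  have hu : HasFDerivAt (fun y => deriv H (V y) * fderiv ℂ V y (Pi.single j 1))
      (dH • Q + (DV (Pi.single j 1)) • (m • DV)) x := hu1.mul hu2
  -- first part : 2 * y j * (w j y)⁻¹
  have hinvj : HasFDerivAt (fun z => (H (V z) - β j)⁻¹) ((-((w j)^2)⁻¹) • DW) x :=
    (hasDerivAt_inv (hwne j)).comp_hasFDerivAt x (hW j)
  have hA : HasFDerivAt (fun y : Fin n → ℂ => 2 * y j * (H (V y) - β j)⁻¹)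
      ((2 * x j) • ((-((w j)^2)⁻¹) • DW) + ((w j)⁻¹) • ((2:ℂ) • P j)) x := by
    have hp : HasFDerivAt (fun z : Fin n → ℂ => 2 * z j) ((2:ℂ) • P j) x :=
      (P j).hasFDerivAt.const_mul 2
    exact hp.mul hinvj
  -- S
  have hSterm : ∀ i : Fin n, HasFDerivAt (fun z : Fin n → ℂ => (z i)^2 * ((H (V z) - β i)^2)⁻¹)
      ( ((x i)^2) • ((-(((w i)^2)^2)⁻¹) • (((2:ℂ) * (w i)^1) • DW))
        + (((w i)^2)⁻¹) • (((2:ℂ) * (x i)^1) • P i)) x := by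
    intro i
    have hp : HasFDerivAt (fun z : Fin n → ℂ => z i) (P i) x := (P i).hasFDerivAt
    have hsq : HasFDerivAt (fun z : Fin n → ℂ => (z i)^2) (((2:ℂ) * (x i)^1) • P i) x := by
      simpa [Function.comp_def] using (hasDerivAt_pow 2 (x i)).comp_hasFDerivAt x hp
    have hpow : HasFDerivAt (fun z => (H (V z) - β i)^2) (((2:ℂ) * (w i)^1) • DW) x := by
      simpa [Function.comp_def] using (hasDerivAt_pow 2 (w i)).comp_hasFDerivAt x (hW i)
    have hinv2 : HasFDerivAt (fun z => ((H (V z) - β i)^2)⁻¹)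
        ((-(((w i)^2)^2)⁻¹) • (((2:ℂ) * (w i)^1) • DW)) x :=
      (hasDerivAt_inv (pow_ne_zero 2 (hwne i))).comp_hasFDerivAt x hpow
    exact hsq.mul hinv2
  have hS : HasFDerivAt (fun z : Fin n → ℂ => ∑ i, (z i)^2 * ((H (V z) - β i)^2)⁻¹)
      (∑ i, ( ((x i)^2) • ((-(((w i)^2)^2)⁻¹) • (((2:ℂ) * (w i)^1) • DW))
        + (((w i)^2)⁻¹) • (((2:ℂ) * (x i)^1) • P i))) x := HasFDerivAt.fun_sum (fun i _ => hSterm i)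
  -- G j
  have hG : HasFDerivAt (fun y : Fin n → ℂ => 2 * y j * (H (V y) - β j)⁻¹
      - (∑ i, (y i)^2 * ((H (V y) - β i)^2)⁻¹) * (deriv H (V y) * fderiv ℂ V y (Pi.single j 1)))
      ( ((2 * x j) • ((-((w j)^2)⁻¹) • DW) + ((w j)⁻¹) • ((2:ℂ) • P j))
        - ( (∑ i, (x i)^2 * ((w i)^2)⁻¹) • (dH • Q + (DV (Pi.single j 1)) • (m • DV))
            + (dH * DV (Pi.single j 1)) •
              (∑ i, ( ((x i)^2) • ((-(((w i)^2)^2)⁻¹) • (((2:ℂ) * (w i)^1) • DW))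
                + (((w i)^2)⁻¹) • (((2:ℂ) * (x i)^1) • P i))) ) ) x := by
    have := hA.sub (hS.mul hu)
    exact this
  have hGzero : fderiv ℂ (fun y : Fin n → ℂ => 2 * y j * (H (V y) - β j)⁻¹
      - (∑ i, (y i)^2 * ((H (V y) - β i)^2)⁻¹) * (deriv H (V y) * fderiv ℂ V y (Pi.single j 1))) x = 0 := by
    have heq : (fun y : Fin n → ℂ => 2 * y j * (H (V y) - β j)⁻¹
        - (∑ i, (y i)^2 * ((H (V y) - β i)^2)⁻¹) * (deriv H (V y) * fderiv ℂ V y (Pi.single j 1)))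
        =ᶠ[nhds x] (fun _ => 0) := by
      filter_upwards [hs.mem_nhds hx] with z hz
      have := key1 z hz j
      simp only [div_eq_mul_inv] at this ⊢
      rw [← this]
      ring
    rw [heq.fderiv_eq]
    exact fderiv_const_apply 0
  have h0 := hG.fderiv.symm.trans hGzero
  have h1 := ContinuousLinearMap.ext_iff.1 h0 (Pi.single j 1)
  simp only [P, ContinuousLinearMap.sub_apply, ContinuousLinearMap.add_apply,
    ContinuousLinearMap.smul_apply, ContinuousLinearMap.coe_sum', Finset.sum_apply,
    ContinuousLinearMap.proj_apply, smul_eq_mul, ContinuousLinearMap.zero_apply,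
    Pi.single_eq_same, pow_one] at h1
  have hDWj : DW (Pi.single j 1) = dH * DV (Pi.single j 1) := by
    rw [hDW]; simp
  have hterm2 : ∀ i : Fin n,
      x i ^ 2 * (-((w i ^ 2) ^ 2)⁻¹ * (2 * w i * DW (Pi.single j 1)))
        + (w i ^ 2)⁻¹ * (2 * x i * (Pi.single j 1 : Fin n → ℂ) i)
      = (-(2 * DW (Pi.single j 1))) * (x i ^ 2 * ((w i)^3)⁻¹)
        + (w i ^ 2)⁻¹ * (2 * x i * (Pi.single j 1 : Fin n → ℂ) i) := by
    intro i
    have h := hwne i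
    field_simp
  rw [Finset.sum_congr rfl (fun i _ => hterm2 i), Finset.sum_add_distrib,
    ← Finset.mul_sum] at h1
  have hδ : ∑ i : Fin n, (w i ^ 2)⁻¹ * (2 * x i * (Pi.single j 1 : Fin n → ℂ) i)
      = (w j ^ 2)⁻¹ * (2 * x j) := by
    rw [Finset.sum_eq_single j]
    · simp
    · intro b _ hb
      simp [Pi.single_eq_of_ne hb]
    · simp
  rw [hδ, hDWj] at h1
  simp only [hwdef] at h1
  simp only [div_eq_mul_inv]
  linear_combination h1

lemma key3_aux {n : ℕ} (β : Fin n → ℂ) (H : ℂ → ℂ) (hH : Differentiable ℂ H)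
    (hODE : ∀ v, (deriv H v)^2 = ∏ i, (H v - β i))
    (v : ℂ) (h1 : deriv H v ≠ 0) (h2 : ∀ i, H v - β i ≠ 0) :
    2 * deriv (deriv H) v = (deriv H v)^2 * ∑ i, (H v - β i)⁻¹ := by
  classical
  have hHd2 : Differentiable ℂ (deriv H) :=
    ((contDiff_succ_iff_deriv.1 (hH.contDiff : ContDiff ℂ (1+1) H)).2.2).differentiable one_ne_zero
  have hL : HasDerivAt (fun t => (deriv H t)^2)
      ((2:ℂ) * (deriv H v)^1 * deriv (deriv H) v) v := (hHd2 v).hasDerivAt.pow 2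
  have hR : HasDerivAt (fun t => ∏ i, (H t - β i))
      (∑ i, (∏ k ∈ Finset.univ.erase i, (H v - β k)) • (deriv H v)) v :=
    HasDerivAt.fun_finsetProd (fun i _ => (hH v).hasDerivAt.sub_const (β i))
  have hfun : (fun t => (deriv H t)^2) = (fun t => ∏ i, (H t - β i)) := funext hODE
  rw [hfun] at hL
  have heq := hL.unique hR
  have herase : ∀ i : Fin n, (∏ k ∈ Finset.univ.erase i, (H v - β k))
      = (deriv H v)^2 * (H v - β i)⁻¹ := by
    intro i
    have hp : (∏ k ∈ Finset.univ.erase i, (H v - β k)) * (H v - β i)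
        = ∏ k, (H v - β k) := Finset.prod_erase_mul _ _ (Finset.mem_univ i)
    rw [← hODE v] at hp
    exact (eq_mul_inv_iff_mul_eq₀ (h2 i)).2 hp
  simp only [smul_eq_mul, herase] at heq
  refine mul_left_cancel₀ h1 ?_
  calc deriv H v * (2 * deriv (deriv H) v) = 2 * deriv H v ^ 1 * deriv (deriv H) v := by ring
    _ = ∑ i, deriv H v ^ 2 * (H v - β i)⁻¹ * deriv H v := heq
    _ = deriv H v * (deriv H v ^ 2 * ∑ i, (H v - β i)⁻¹) := by
        rw [Finset.mul_sum, Finset.mul_sum]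
        exact Finset.sum_congr rfl (fun i _ => by ring)

/-- Solutions of the Laplace equation constant on a central quadric:
if `Ḣ² = ∏ᵢ (H - βᵢ)` and `V` is defined implicitly by
`∑ᵢ xᵢ²/(H(V) - βᵢ) = C`, then `V` is harmonic. -/
theorem harmonic_on_central_quadric {n : ℕ}
    (β : Fin n → ℂ) (H : ℂ → ℂ) (hH : Differentiable ℂ H)
    (hODE : ∀ v, (deriv H v)^2 = ∏ i, (H v - β i))
    (C : ℂ) (s : Set (Fin n → ℂ)) (hs : IsOpen s)
    (V : (Fin n → ℂ) → ℂ)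
    (hV : ContDiffOn ℂ 2 V s)
    (hrel : ∀ x ∈ s, ∑ i, (x i)^2 / (H (V x) - β i) = C)
    (hden : ∀ x ∈ s, ∀ i, H (V x) - β i ≠ 0)
    (hH' : ∀ x ∈ s, deriv H (V x) ≠ 0)
    (hnd : ∀ x ∈ s, ∑ i, (x i)^2 / (H (V x) - β i)^2 ≠ 0) :
    ∀ x ∈ s,
      ∑ i, fderiv ℂ (fun y => fderiv ℂ V y (Pi.single i 1)) x (Pi.single i 1) = 0 := by
  classical
  have key1 := key1_aux β H hH C s hs V hV hrel hden
  intro x hx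
  have hwne := hden x hx
  have hSne : (∑ i, (x i)^2 / (H (V x) - β i)^2) ≠ 0 := hnd x hx
  have hdHne : deriv H (V x) ≠ 0 := hH' x hx
  have hm2 : 2 * deriv (deriv H) (V x)
      = (deriv H (V x))^2 * ∑ i, (H (V x) - β i)⁻¹ :=
    key3_aux β H hH hODE (V x) hdHne hwne
  set dH := deriv H (V x) with hdHdef
  set m := deriv (deriv H) (V x) with hmdef
  set S := ∑ i, (x i)^2 / (H (V x) - β i)^2 with hSdef
  set T := ∑ i, (x i)^2 / (H (V x) - β i)^3 with hTdef
  set Pp := ∑ i, (H (V x) - β i)⁻¹ with hPdef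
  set vj : Fin n → ℂ := fun j => fderiv ℂ V x (Pi.single j 1) with hvjdef
  set V2 : Fin n → ℂ := fun j =>
    fderiv ℂ (fun y => fderiv ℂ V y (Pi.single j 1)) x (Pi.single j 1) with hV2def
  have E1 : ∀ j, 2 * x j / (H (V x) - β j) = S * (dH * vj j) := fun j => key1 x hx j
  have E2 : ∀ j,
      2 * (H (V x) - β j)⁻¹
      - 2 * x j * (dH * vj j) / (H (V x) - β j)^2
      - (2 * x j / (H (V x) - β j)^2 - 2 * T * (dH * vj j)) * (dH * vj j)
      - S * (m * (vj j)^2 + dH * V2 j) = 0 :=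
    fun j => key2_aux β H hH C s hs V hV hrel hden key1 x hx j
  have hvj : ∀ j, vj j = 2 * x j / (S * (H (V x) - β j) * dH) := by
    intro j
    have h := E1 j
    have hw := hwne j
    field_simp at h ⊢
    linear_combination (-1 : ℂ) * h
  have hsum1 : ∀ j, x j * vj j / (H (V x) - β j)^2
      = (2/(S*dH)) * ((x j)^2 / (H (V x) - β j)^3) := by
    intro j
    rw [hvj j]
    have hw := hwne j
    field_simp
  have hsum2 : ∀ j, (vj j)^2 = (4/(S^2*dH^2)) * ((x j)^2 / (H (V x) - β j)^2) := by
    intro j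
    rw [hvj j]
    have hw := hwne j
    field_simp
    ring
  have hE : ∀ j, S * (dH * V2 j)
      = 2 * (H (V x) - β j)⁻¹ - 4 * dH * (x j * vj j / (H (V x) - β j)^2)
        + (2 * T * dH^2 - S * m) * ((vj j)^2) := by
    intro j
    linear_combination (-1 : ℂ) * E2 j
  have hsumE : S * dH * (∑ j, V2 j)
      = 2 * Pp - 4 * dH * ((2/(S*dH)) * T) + (2 * T * dH^2 - S * m) * ((4/(S^2*dH^2)) * S) := by
    calc S * dH * (∑ j, V2 j) = ∑ j, S * (dH * V2 j) := by
          rw [Finset.mul_sum]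
          exact Finset.sum_congr rfl (fun j _ => by ring)
      _ = ∑ j, (2 * (H (V x) - β j)⁻¹ - 4 * dH * (x j * vj j / (H (V x) - β j)^2)
            + (2 * T * dH^2 - S * m) * ((vj j)^2)) :=
          Finset.sum_congr rfl (fun j _ => hE j)
      _ = 2 * Pp - 4 * dH * ((2/(S*dH)) * T) + (2 * T * dH^2 - S * m) * ((4/(S^2*dH^2)) * S) := by
          simp only [hsum1, hsum2]
          rw [Finset.sum_add_distrib, Finset.sum_sub_distrib]
          simp only [← Finset.mul_sum, ← hPdef, ← hTdef, ← hSdef]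
  have hfinal : S * dH * (∑ j, V2 j) = 0 := by
    rw [hsumE]
    field_simp
    linear_combination (-2 * S) * hm2
  have := (mul_eq_zero.mp hfinal).resolve_left (mul_ne_zero hSne hdHne)
  exact this
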